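/- Suppose 0 < P(R = 1 | X, D) < 1 almost surely, let π_R(X, D) := P(R = 1 | X, D) / P(R = 0 | X, D) and m_C(η, X, D) := P(V_C < η | X, D, R = 1) be the true nuisance functions, and let m̂ : ℝ × ℝ^k × {0,1} → [0,1] be measurable and π̂ : ℝ^k × {0,1} → ℝ be measurable and bounded below by a positive constant. Then for every η ∈ ℝ: E[ ψ_C(η; m̂, π̂) ] − E[ ψ_C(η; m_C, π_R) ] = E[ P(R = 1 | X, D) · ( 1/π̂(X, D) − 1/π_R(X, D) ) · ( m_C(η, X, D) − m̂(η, X, D) ) ]. -/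

import Mathlib

open MeasureTheory ProbabilityTheory
open scoped ENNReal

def auxG {Ω : Type*} {k : ℕ} (X : Ω → Fin k → ℝ) (D : Ω → ℝ) : MeasurableSpace Ω :=
  MeasurableSpace.comap (fun ω' => (X ω', D ω')) inferInstance

lemma aux_abs_mul_le {x y c d : ℝ} (hx : |x| ≤ c) (hy : |y| ≤ d) : |x * y| ≤ c * d := by
  rw [abs_mul]
  exact mul_le_mul hx hy (abs_nonneg _) (le_trans (abs_nonneg _) hx)

lemma aux_int_of_bound {Ω : Type*} [MeasurableSpace Ω] (θ : Measure Ω) [IsFiniteMeasure θ]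
    (f : Ω → ℝ) (C : ℝ) (hf : AEStronglyMeasurable f θ) (h : ∀ᵐ ω ∂θ, |f ω| ≤ C) :
    Integrable f θ :=
  (integrable_const C).mono' hf (by simpa [Real.norm_eq_abs] using h)

lemma aux_pull {Ω : Type*} [m0 : MeasurableSpace Ω] {G : MeasurableSpace Ω} (hG : G ≤ m0)
    (θ : @Measure Ω m0) [IsFiniteMeasure θ] (f f' g : Ω → ℝ)
    (hf : Integrable f θ)
    (hf' : f' =ᵐ[θ] MeasureTheory.condExp G θ f)
    (hg : StronglyMeasurable[G] g)
    (hgf : Integrable (g * f) θ) :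
    ∫ ω, g ω * f ω ∂θ = ∫ ω, g ω * f' ω ∂θ := by
  haveI : SigmaFinite (θ.trim hG) := inferInstance
  have h1 : MeasureTheory.condExp G θ (g * f) =ᵐ[θ] g * MeasureTheory.condExp G θ f :=
    condExp_mul_of_stronglyMeasurable_left hg hgf hf
  have h2 : ∫ ω, (g * f) ω ∂θ = ∫ ω, MeasureTheory.condExp G θ (g * f) ω ∂θ :=
    (integral_condExp hG).symm
  refine h2.trans (integral_congr_ae ?_)
  filter_upwards [h1, hf'] with ω h1ω h2ω
  rw [h1ω, Pi.mul_apply, h2ω]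

/-- second-order remainder / double robustness identity:
with the true nuisances `π_R(X,D) = P(R=1|X,D)/P(R=0|X,D)` and
`m_C(η,X,D) = P(V_C<η|X,D,R=1)`, and arbitrary estimates `m̂ ∈ [0,1]` and `π̂ ≥ c > 0`:
`E[ψ_C(η; m̂, π̂)] − E[ψ_C(η; m_C, π_R)]
  = E[ P(R=1|X,D)·(1/π̂(X,D) − 1/π_R(X,D))·(m_C(η,X,D) − m̂(η,X,D)) ]`. -/
theorem stmt_12
    {Ω : Type*} [mΩ : MeasurableSpace Ω] [StandardBorelSpace Ω]
    (P : Measure Ω) [IsProbabilityMeasure P]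
    {k : ℕ} (X : Ω → (Fin k → ℝ)) (Y1 Y0 D R : Ω → ℝ)
    (hX : Measurable X) (hY1 : Measurable Y1) (hY0 : Measurable Y0)
    (hD : Measurable D) (hR : Measurable R)
    (hDbin : ∀ ω, D ω = 0 ∨ D ω = 1) (hRbin : ∀ ω, R ω = 0 ∨ R ω = 1)
    -- nonconformity score V_C = v(X, D, Y(1), Y(0))
    (v : (Fin k → ℝ) × ℝ × ℝ × ℝ → ℝ) (hv : Measurable v)
    (V : Ω → ℝ) (hV : V = fun ω => v (X ω, D ω, Y1 ω, Y0 ω))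
    (γ : ℝ) (hγ : γ ∈ Set.Ioo (0 : ℝ) 1)
    (hpos : 0 < P {ω | R ω = 1})
    -- eR is (a version of) the response propensity P(R = 1 | X, D),
    -- with 0 < P(R = 1 | X, D) < 1 almost surely
    (eR : (Fin k → ℝ) → ℝ → ℝ) (heRmeas : Measurable fun p : (Fin k → ℝ) × ℝ => eR p.1 p.2)
    (heR : (fun ω => eR (X ω) (D ω)) =ᵐ[P]
      MeasureTheory.condExp (MeasurableSpace.comap (fun ω' => (X ω', D ω')) inferInstance) P
        (Set.indicator {ω' | R ω' = 1} (fun _ => (1 : ℝ))))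
    (heRbdd : ∀ᵐ ω ∂P, 0 < eR (X ω) (D ω) ∧ eR (X ω) (D ω) < 1)
    -- mC is (a version of) the true conditional CDF of V_C given (X, D) on the responders
    (mC : ℝ → (Fin k → ℝ) → ℝ → ℝ)
    (hmCmeas : Measurable fun p : ℝ × (Fin k → ℝ) × ℝ => mC p.1 p.2.1 p.2.2)
    (hmCbdd : ∀ η x d, mC η x d ∈ Set.Icc (0 : ℝ) 1)
    (hmC : ∀ η : ℝ, (fun ω => mC η (X ω) (D ω)) =ᵐ[P[|{ω' | R ω' = 1}]]
      MeasureTheory.condExp (MeasurableSpace.comap (fun ω' => (X ω', D ω')) inferInstance)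
        (P[|{ω' | R ω' = 1}])
        (Set.indicator {ω' | V ω' < η} (fun _ => (1 : ℝ))))
    -- m̂ is measurable with values in [0,1]
    (mhat : ℝ → (Fin k → ℝ) → ℝ → ℝ)
    (hmhatmeas : Measurable fun p : ℝ × (Fin k → ℝ) × ℝ => mhat p.1 p.2.1 p.2.2)
    (hmhatbdd : ∀ η x d, mhat η x d ∈ Set.Icc (0 : ℝ) 1)
    -- π̂ is measurable and bounded below by a positive constant
    (πhat : (Fin k → ℝ) → ℝ → ℝ)
    (hπhatmeas : Measurable fun p : (Fin k → ℝ) × ℝ => πhat p.1 p.2)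
    (hπhatpos : ∃ c : ℝ, 0 < c ∧ ∀ x d, c ≤ πhat x d)
    (η : ℝ) :
    (∫ ω, ((1 - R ω) * (mhat η (X ω) (D ω) - (1 - γ)) +
        (R ω / πhat (X ω) (D ω)) *
          ((if V ω < η then (1 : ℝ) else 0) - mhat η (X ω) (D ω))) ∂P) -
      (∫ ω, ((1 - R ω) * (mC η (X ω) (D ω) - (1 - γ)) +
        (R ω / (eR (X ω) (D ω) / (1 - eR (X ω) (D ω)))) *
          ((if V ω < η then (1 : ℝ) else 0) - mC η (X ω) (D ω))) ∂P) =
      ∫ ω, eR (X ω) (D ω) *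
        (1 / πhat (X ω) (D ω) - 1 / (eR (X ω) (D ω) / (1 - eR (X ω) (D ω)))) *
        (mC η (X ω) (D ω) - mhat η (X ω) (D ω)) ∂P := by
  obtain ⟨c₀, hc₀, hc₀le⟩ := hπhatpos
  have hTmeas : Measurable (fun ω => (X ω, D ω)) := hX.prodMk hD
  have hG : auxG X D ≤ mΩ := hTmeas.comap_le
  have hTG : Measurable[auxG X D] fun ω => (X ω, D ω) := Measurable.of_comap_le le_rfl
  have compSM : ∀ b : ((Fin k → ℝ) × ℝ) → ℝ, Measurable b →
      StronglyMeasurable[auxG X D] fun ω => b (X ω, D ω) := fun b hb =>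
    (hb.comp hTG).stronglyMeasurable
  -- measurability
  have hVmeas : Measurable V := by
    rw [hV]; exact hv.comp (hX.prodMk (hD.prodMk (hY1.prodMk hY0)))
  have he'meas : Measurable fun ω => eR (X ω) (D ω) := heRmeas.comp hTmeas
  have hm0base : Measurable fun p : (Fin k → ℝ) × ℝ => mC η p.1 p.2 :=
    hmCmeas.comp (measurable_const.prodMk measurable_id)
  have hm1base : Measurable fun p : (Fin k → ℝ) × ℝ => mhat η p.1 p.2 :=
    hmhatmeas.comp (measurable_const.prodMk measurable_id)
  have hm0meas : Measurable fun ω => mC η (X ω) (D ω) := hm0base.comp hTmeas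
  have hm1meas : Measurable fun ω => mhat η (X ω) (D ω) := hm1base.comp hTmeas
  have hπ'meas : Measurable fun ω => πhat (X ω) (D ω) := hπhatmeas.comp hTmeas
  have hgπmeas : Measurable fun ω => 1 / πhat (X ω) (D ω) := measurable_const.div hπ'meas
  have hqmeas : Measurable fun ω => (1 - eR (X ω) (D ω)) / eR (X ω) (D ω) :=
    (measurable_const.sub he'meas).div he'meas
  have hIvmeas : Measurable fun ω => (if V ω < η then (1:ℝ) else 0) :=
    Measurable.ite (measurableSet_lt hVmeas measurable_const) measurable_const measurable_const
  -- pointwise bounds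
  have hR01 : ∀ ω, 0 ≤ R ω ∧ R ω ≤ 1 := fun ω => by
    rcases hRbin ω with h | h <;> rw [h] <;> norm_num
  have hbR : ∀ ω, |R ω| ≤ 1 := fun ω => abs_le.mpr ⟨by linarith [(hR01 ω).1], (hR01 ω).2⟩
  have hb1R : ∀ ω, |1 - R ω| ≤ 1 := fun ω =>
    abs_le.mpr ⟨by linarith [(hR01 ω).2], by linarith [(hR01 ω).1]⟩
  have hbIv : ∀ ω, |(if V ω < η then (1:ℝ) else 0)| ≤ 1 := fun ω => by
    split <;> norm_num
  have hbm0 : ∀ ω, |mC η (X ω) (D ω)| ≤ 1 := fun ω =>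
    abs_le.mpr ⟨by linarith [(hmCbdd η (X ω) (D ω)).1], (hmCbdd η (X ω) (D ω)).2⟩
  have hbm1 : ∀ ω, |mhat η (X ω) (D ω)| ≤ 1 := fun ω =>
    abs_le.mpr ⟨by linarith [(hmhatbdd η (X ω) (D ω)).1], (hmhatbdd η (X ω) (D ω)).2⟩
  have hπ'pos : ∀ ω, 0 < πhat (X ω) (D ω) := fun ω => lt_of_lt_of_le hc₀ (hc₀le _ _)
  have hbgπ : ∀ ω, |1 / πhat (X ω) (D ω)| ≤ 1 / c₀ := fun ω => by
    rw [abs_of_nonneg (le_of_lt (one_div_pos.mpr (hπ'pos ω)))]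
    exact one_div_le_one_div_of_le hc₀ (hc₀le _ _)
  have hbe' : ∀ᵐ ω ∂P, |eR (X ω) (D ω)| ≤ 1 := by
    filter_upwards [heRbdd] with ω hω
    exact abs_le.mpr ⟨by linarith [hω.1], hω.2.le⟩
  -- the conditioning set
  set s : Set Ω := {ω | R ω = 1} with hsdef
  have hs : MeasurableSet s := hR (measurableSet_singleton 1)
  have hsne : P s ≠ 0 := hpos.ne'
  set μ : Measure Ω := P[|s] with hμdef
  haveI hμprob : IsProbabilityMeasure μ := cond_isProbabilityMeasure hsne
  -- indicator rewrites
  have hRind : Set.indicator {ω' | R ω' = 1} (fun _ => (1:ℝ)) = R := by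
    funext ω; rcases hRbin ω with h | h <;>
      simp [Set.indicator_apply, Set.mem_setOf_eq, h]
  have hIvind : Set.indicator {ω' | V ω' < η} (fun _ => (1:ℝ)) =
      fun ω => if V ω < η then (1:ℝ) else 0 := by
    funext ω; simp [Set.indicator_apply, Set.mem_setOf_eq]
  have heR' : (fun ω => eR (X ω) (D ω)) =ᵐ[P] MeasureTheory.condExp (auxG X D) P R := by
    rw [← hRind]; exact heR
  have hmC' : (fun ω => mC η (X ω) (D ω)) =ᵐ[μ]
      MeasureTheory.condExp (auxG X D) μ (fun ω => if V ω < η then (1:ℝ) else 0) := by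
    rw [← hIvind]; exact hmC η
  -- bridge between P and μ
  have hcPs : (P s).toReal * ((P s)⁻¹).toReal = 1 := by
    rw [ENNReal.toReal_inv]
    exact mul_inv_cancel₀ (ENNReal.toReal_ne_zero.mpr ⟨hsne, measure_ne_top P s⟩)
  have bridge : ∀ f : Ω → ℝ, ∫ ω, R ω * f ω ∂P = (P s).toReal * ∫ ω, f ω ∂μ := by
    intro f
    have h1 : (fun ω => R ω * f ω) = s.indicator f := by
      funext ω; rcases hRbin ω with h | h <;>
        simp [Set.indicator_apply, hsdef, Set.mem_setOf_eq, h]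
    rw [h1, integral_indicator hs, hμdef]
    simp only [ProbabilityTheory.cond]
    rw [integral_smul_measure, smul_eq_mul, ← mul_assoc, hcPs, one_mul]
  -- integrability of R and Iv
  have intR : Integrable R P := aux_int_of_bound P R 1 hR.aestronglyMeasurable (ae_of_all _ hbR)
  have intIvμ : Integrable (fun ω => if V ω < η then (1:ℝ) else 0) μ :=
    aux_int_of_bound μ _ 1 hIvmeas.aestronglyMeasurable (ae_of_all _ hbIv)
  -- pull-out specializations
  have pullP : ∀ g : Ω → ℝ, StronglyMeasurable[auxG X D] g → Integrable (g * R) P →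
      ∫ ω, g ω * R ω ∂P = ∫ ω, g ω * eR (X ω) (D ω) ∂P := fun g hg hint =>
    aux_pull hG P R _ g intR heR' hg hint
  have pullμ : ∀ g : Ω → ℝ, StronglyMeasurable[auxG X D] g →
      Integrable (g * fun ω => if V ω < η then (1:ℝ) else 0) μ →
      ∫ ω, g ω * (if V ω < η then (1:ℝ) else 0) ∂μ = ∫ ω, g ω * mC η (X ω) (D ω) ∂μ :=
    fun g hg hint => aux_pull hG μ _ _ g intIvμ hmC' hg hint
  have intbnd : ∀ (f : Ω → ℝ) (C : ℝ), Measurable f → (∀ ω, |f ω| ≤ C) → Integrable f P :=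
    fun f C hf h => aux_int_of_bound P f C hf.aestronglyMeasurable (ae_of_all _ h)
  have intbndμ : ∀ (f : Ω → ℝ) (C : ℝ), Measurable f → (∀ ω, |f ω| ≤ C) → Integrable f μ :=
    fun f C hf h => aux_int_of_bound μ f C hf.aestronglyMeasurable (ae_of_all _ h)
  -- integrability of R * q via truncation
  have hq0ae : ∀ᵐ ω ∂P, 0 ≤ (1 - eR (X ω) (D ω)) / eR (X ω) (D ω) := by
    filter_upwards [heRbdd] with ω hω
    exact div_nonneg (by linarith [hω.2]) hω.1.le
  have hgn01 : ∀ (n : ℕ) (ω : Ω),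
      0 ≤ max (min ((1 - eR (X ω) (D ω)) / eR (X ω) (D ω)) n) 0 ∧
      max (min ((1 - eR (X ω) (D ω)) / eR (X ω) (D ω)) n) 0 ≤ n :=
    fun n ω => ⟨le_max_right _ _, max_le (min_le_right _ _) (Nat.cast_nonneg n)⟩
  have hgnint : ∀ n : ℕ, Integrable
      (fun ω => max (min ((1 - eR (X ω) (D ω)) / eR (X ω) (D ω)) n) 0 * R ω) P := by
    intro n
    refine intbnd _ n (((hqmeas.min measurable_const).max measurable_const).mul hR) fun ω => ?_
    rw [abs_of_nonneg (mul_nonneg (hgn01 n ω).1 (hR01 ω).1)]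
    calc max (min ((1 - eR (X ω) (D ω)) / eR (X ω) (D ω)) n) 0 * R ω ≤ (n : ℝ) * 1 :=
          mul_le_mul (hgn01 n ω).2 (hR01 ω).2 (hR01 ω).1 (Nat.cast_nonneg n)
      _ = n := mul_one _
  have key : ∀ n : ℕ,
      ∫ ω, max (min ((1 - eR (X ω) (D ω)) / eR (X ω) (D ω)) n) 0 * R ω ∂P ≤ 1 := by
    intro n
    rw [pullP _ (compSM (fun p => max (min ((1 - eR p.1 p.2) / eR p.1 p.2) n) 0)
      ((((measurable_const.sub heRmeas).div heRmeas).min measurable_const).max measurable_const))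
      (hgnint n)]
    have hle : ∀ᵐ ω ∂P,
        max (min ((1 - eR (X ω) (D ω)) / eR (X ω) (D ω)) n) 0 * eR (X ω) (D ω) ≤ 1 := by
      filter_upwards [heRbdd] with ω hω
      have hq0' : 0 ≤ (1 - eR (X ω) (D ω)) / eR (X ω) (D ω) :=
        div_nonneg (by linarith [hω.2]) hω.1.le
      have h1 : max (min ((1 - eR (X ω) (D ω)) / eR (X ω) (D ω)) n) 0 ≤
          (1 - eR (X ω) (D ω)) / eR (X ω) (D ω) := max_le (min_le_left _ _) hq0'
      calc max (min ((1 - eR (X ω) (D ω)) / eR (X ω) (D ω)) n) 0 * eR (X ω) (D ω)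
          ≤ ((1 - eR (X ω) (D ω)) / eR (X ω) (D ω)) * eR (X ω) (D ω) :=
            mul_le_mul_of_nonneg_right h1 hω.1.le
        _ = 1 - eR (X ω) (D ω) := div_mul_cancel₀ _ hω.1.ne'
        _ ≤ 1 := by linarith [hω.1]
    have hint1 : Integrable
        (fun ω => max (min ((1 - eR (X ω) (D ω)) / eR (X ω) (D ω)) n) 0 * eR (X ω) (D ω)) P := by
      refine aux_int_of_bound P _ ((n : ℝ) * 1)
        ((((hqmeas.min measurable_const).max measurable_const).mul he'meas).aestronglyMeasurable) ?_
      filter_upwards [hbe'] with ω hω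
      exact aux_abs_mul_le (by rw [abs_of_nonneg (hgn01 n ω).1]; exact (hgn01 n ω).2) hω
    calc ∫ ω, max (min ((1 - eR (X ω) (D ω)) / eR (X ω) (D ω)) n) 0 * eR (X ω) (D ω) ∂P
        ≤ ∫ _ω, (1:ℝ) ∂P := integral_mono_ae hint1 (integrable_const 1) hle
      _ = 1 := by simp
  have hqq : Integrable (fun ω => R ω * ((1 - eR (X ω) (D ω)) / eR (X ω) (D ω))) P := by
    refine ⟨(hR.mul hqmeas).aestronglyMeasurable, ?_⟩
    rw [hasFiniteIntegral_iff_norm]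
    have hsup : ∀ᵐ ω ∂P, ENNReal.ofReal ‖R ω * ((1 - eR (X ω) (D ω)) / eR (X ω) (D ω))‖ =
        ⨆ n : ℕ, ENNReal.ofReal (max (min ((1 - eR (X ω) (D ω)) / eR (X ω) (D ω)) n) 0 * R ω) := by
      filter_upwards [hq0ae] with ω hω
      rw [Real.norm_eq_abs, abs_of_nonneg (mul_nonneg (hR01 ω).1 hω)]
      apply le_antisymm
      · refine le_iSup_of_le ⌈(1 - eR (X ω) (D ω)) / eR (X ω) (D ω)⌉₊ ?_
        rw [min_eq_left (Nat.le_ceil _), max_eq_left hω, mul_comm]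
      · refine iSup_le fun n => ENNReal.ofReal_le_ofReal ?_
        rw [mul_comm]
        exact mul_le_mul_of_nonneg_left (max_le (min_le_left _ _) hω) (hR01 ω).1
    calc ∫⁻ ω, ENNReal.ofReal ‖R ω * ((1 - eR (X ω) (D ω)) / eR (X ω) (D ω))‖ ∂P
        = ∫⁻ ω, ⨆ n : ℕ, ENNReal.ofReal
            (max (min ((1 - eR (X ω) (D ω)) / eR (X ω) (D ω)) n) 0 * R ω) ∂P :=
          lintegral_congr_ae hsup
      _ = ⨆ n : ℕ, ∫⁻ ω, ENNReal.ofReal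
            (max (min ((1 - eR (X ω) (D ω)) / eR (X ω) (D ω)) n) 0 * R ω) ∂P := by
          refine lintegral_iSup'
            (fun n => ((((hqmeas.min measurable_const).max measurable_const).mul
              hR).ennreal_ofReal).aemeasurable) (ae_of_all _ fun ω a b hab => ?_)
          refine ENNReal.ofReal_le_ofReal (mul_le_mul_of_nonneg_right
            (max_le_max (min_le_min le_rfl (Nat.cast_le.mpr hab)) le_rfl) (hR01 ω).1)
      _ ≤ ⨆ _n : ℕ, (1 : ℝ≥0∞) := by
          refine iSup_mono fun n => ?_
          rw [← ofReal_integral_eq_lintegral_ofReal (hgnint n)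
            (ae_of_all _ fun ω => mul_nonneg (hgn01 n ω).1 (hR01 ω).1)]
          calc ENNReal.ofReal (∫ ω, max (min ((1 - eR (X ω) (D ω)) / eR (X ω) (D ω)) n) 0 * R ω ∂P)
              ≤ ENNReal.ofReal 1 := ENNReal.ofReal_le_ofReal (key n)
            _ = 1 := by simp
      _ < ⊤ := by simp
  have hqμ : Integrable (fun ω => (1 - eR (X ω) (D ω)) / eR (X ω) (D ω)) μ := by
    have h1 : Integrable (fun ω => R ω * ((1 - eR (X ω) (D ω)) / eR (X ω) (D ω)))
        (P.restrict s) := hqq.restrict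
    have h2 : (fun ω => R ω * ((1 - eR (X ω) (D ω)) / eR (X ω) (D ω))) =ᵐ[P.restrict s]
        (fun ω => (1 - eR (X ω) (D ω)) / eR (X ω) (D ω)) := by
      filter_upwards [ae_restrict_mem hs] with ω hω
      have hω1 : R ω = 1 := hω
      rw [hω1, one_mul]
    have h3 := h1.congr h2
    rw [hμdef]
    simp only [ProbabilityTheory.cond]
    exact h3.smul_measure (ENNReal.inv_ne_top.mpr hsne)
  -- integrability under μ of q times bounded things
  have intqIvμ : Integrable (fun ω => ((1 - eR (X ω) (D ω)) / eR (X ω) (D ω)) *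
      (if V ω < η then (1:ℝ) else 0)) μ := by
    refine hqμ.abs.mono' ((hqmeas.mul hIvmeas).aestronglyMeasurable) (ae_of_all _ fun ω => ?_)
    rw [Real.norm_eq_abs, abs_mul]
    calc |(1 - eR (X ω) (D ω)) / eR (X ω) (D ω)| * |if V ω < η then (1:ℝ) else 0|
        ≤ |(1 - eR (X ω) (D ω)) / eR (X ω) (D ω)| * 1 :=
          mul_le_mul_of_nonneg_left (hbIv ω) (abs_nonneg _)
      _ = |(1 - eR (X ω) (D ω)) / eR (X ω) (D ω)| := mul_one _
  have intqm0μ : Integrable (fun ω => ((1 - eR (X ω) (D ω)) / eR (X ω) (D ω)) *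
      mC η (X ω) (D ω)) μ := by
    refine hqμ.abs.mono' ((hqmeas.mul hm0meas).aestronglyMeasurable) (ae_of_all _ fun ω => ?_)
    rw [Real.norm_eq_abs, abs_mul]
    calc |(1 - eR (X ω) (D ω)) / eR (X ω) (D ω)| * |mC η (X ω) (D ω)|
        ≤ |(1 - eR (X ω) (D ω)) / eR (X ω) (D ω)| * 1 :=
          mul_le_mul_of_nonneg_left (hbm0 ω) (abs_nonneg _)
      _ = |(1 - eR (X ω) (D ω)) / eR (X ω) (D ω)| := mul_one _
  have K3 : ∫ ω, R ω * (((1 - eR (X ω) (D ω)) / eR (X ω) (D ω)) *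
      ((if V ω < η then (1:ℝ) else 0) - mC η (X ω) (D ω))) ∂P = 0 := by
    rw [bridge]
    have hsplit : ∫ ω, ((1 - eR (X ω) (D ω)) / eR (X ω) (D ω)) *
        ((if V ω < η then (1:ℝ) else 0) - mC η (X ω) (D ω)) ∂μ
        = (∫ ω, ((1 - eR (X ω) (D ω)) / eR (X ω) (D ω)) * (if V ω < η then (1:ℝ) else 0) ∂μ)
          - ∫ ω, ((1 - eR (X ω) (D ω)) / eR (X ω) (D ω)) * mC η (X ω) (D ω) ∂μ := by
      rw [← integral_sub intqIvμ intqm0μ]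
      exact integral_congr_ae (ae_of_all _ fun ω => by ring)
    have hpm := pullμ _ (compSM (fun p => (1 - eR p.1 p.2) / eR p.1 p.2)
      ((measurable_const.sub heRmeas).div heRmeas)) intqIvμ
    rw [hsplit, hpm, sub_self, mul_zero]
  -- extra bounds
  have hbm10 : ∀ ω, |mhat η (X ω) (D ω) - mC η (X ω) (D ω)| ≤ 2 := fun ω => by
    have h1 := abs_le.mp (hbm1 ω); have h2 := abs_le.mp (hbm0 ω)
    exact abs_le.mpr ⟨by linarith [h1.1, h2.2], by linarith [h1.2, h2.1]⟩
  have hbIvm1 : ∀ ω, |(if V ω < η then (1:ℝ) else 0) - mhat η (X ω) (D ω)| ≤ 2 := fun ω => by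
    have h1 := abs_le.mp (hbIv ω); have h2 := abs_le.mp (hbm1 ω)
    exact abs_le.mpr ⟨by linarith [h1.1, h2.2], by linarith [h1.2, h2.1]⟩
  have hbγ : ∀ ω, |mhat η (X ω) (D ω) - (1 - γ)| ≤ 2 + |γ| := fun ω => by
    have h1 := abs_le.mp (hbm1 ω)
    exact abs_le.mpr ⟨by linarith [h1.1, le_abs_self γ, neg_abs_le γ],
      by linarith [h1.2, le_abs_self γ, neg_abs_le γ]⟩
  have hbγ0 : ∀ ω, |mC η (X ω) (D ω) - (1 - γ)| ≤ 2 + |γ| := fun ω => by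
    have h1 := abs_le.mp (hbm0 ω)
    exact abs_le.mpr ⟨by linarith [h1.1, le_abs_self γ, neg_abs_le γ],
      by linarith [h1.2, le_abs_self γ, neg_abs_le γ]⟩
  -- P-integrabilities
  have iA1 : Integrable (fun ω => (1 - R ω) * (mhat η (X ω) (D ω) - (1 - γ))) P :=
    intbnd _ (1 * (2 + |γ|)) ((measurable_const.sub hR).mul (hm1meas.sub measurable_const))
      fun ω => aux_abs_mul_le (hb1R ω) (hbγ ω)
  have iA2 : Integrable (fun ω => (1 - R ω) * (mC η (X ω) (D ω) - (1 - γ))) P :=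
    intbnd _ (1 * (2 + |γ|)) ((measurable_const.sub hR).mul (hm0meas.sub measurable_const))
      fun ω => aux_abs_mul_le (hb1R ω) (hbγ0 ω)
  have iB1 : Integrable (fun ω => R ω * ((1 / πhat (X ω) (D ω)) *
      ((if V ω < η then (1:ℝ) else 0) - mhat η (X ω) (D ω)))) P :=
    intbnd _ (1 * (1 / c₀ * 2)) (hR.mul (hgπmeas.mul (hIvmeas.sub hm1meas)))
      fun ω => aux_abs_mul_le (hbR ω) (aux_abs_mul_le (hbgπ ω) (hbIvm1 ω))
  have iRgIv : Integrable (fun ω => R ω * ((1 / πhat (X ω) (D ω)) *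
      (if V ω < η then (1:ℝ) else 0))) P :=
    intbnd _ (1 * (1 / c₀ * 1)) (hR.mul (hgπmeas.mul hIvmeas))
      fun ω => aux_abs_mul_le (hbR ω) (aux_abs_mul_le (hbgπ ω) (hbIv ω))
  have iRgm1 : Integrable (fun ω => R ω * ((1 / πhat (X ω) (D ω)) * mhat η (X ω) (D ω))) P :=
    intbnd _ (1 * (1 / c₀ * 1)) (hR.mul (hgπmeas.mul hm1meas))
      fun ω => aux_abs_mul_le (hbR ω) (aux_abs_mul_le (hbgπ ω) (hbm1 ω))
  have iGm0R : Integrable (fun ω => ((1 / πhat (X ω) (D ω)) * mC η (X ω) (D ω)) * R ω) P :=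
    intbnd _ ((1 / c₀ * 1) * 1) ((hgπmeas.mul hm0meas).mul hR)
      fun ω => aux_abs_mul_le (aux_abs_mul_le (hbgπ ω) (hbm0 ω)) (hbR ω)
  have iGm1R : Integrable (fun ω => ((1 / πhat (X ω) (D ω)) * mhat η (X ω) (D ω)) * R ω) P :=
    intbnd _ ((1 / c₀ * 1) * 1) ((hgπmeas.mul hm1meas).mul hR)
      fun ω => aux_abs_mul_le (aux_abs_mul_le (hbgπ ω) (hbm1 ω)) (hbR ω)
  have iM10 : Integrable (fun ω => mhat η (X ω) (D ω) - mC η (X ω) (D ω)) P :=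
    intbnd _ 2 (hm1meas.sub hm0meas) hbm10
  have iM10R : Integrable (fun ω => (mhat η (X ω) (D ω) - mC η (X ω) (D ω)) * R ω) P :=
    intbnd _ (2 * 1) ((hm1meas.sub hm0meas).mul hR) fun ω => aux_abs_mul_le (hbm10 ω) (hbR ω)
  have iGm0e : Integrable (fun ω => ((1 / πhat (X ω) (D ω)) * mC η (X ω) (D ω)) *
      eR (X ω) (D ω)) P := by
    refine aux_int_of_bound P _ ((1 / c₀ * 1) * 1)
      (((hgπmeas.mul hm0meas).mul he'meas).aestronglyMeasurable) ?_
    filter_upwards [hbe'] with ω hω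
    exact aux_abs_mul_le (aux_abs_mul_le (hbgπ ω) (hbm0 ω)) hω
  have iGm1e : Integrable (fun ω => ((1 / πhat (X ω) (D ω)) * mhat η (X ω) (D ω)) *
      eR (X ω) (D ω)) P := by
    refine aux_int_of_bound P _ ((1 / c₀ * 1) * 1)
      (((hgπmeas.mul hm1meas).mul he'meas).aestronglyMeasurable) ?_
    filter_upwards [hbe'] with ω hω
    exact aux_abs_mul_le (aux_abs_mul_le (hbgπ ω) (hbm1 ω)) hω
  have iM10e : Integrable (fun ω => (mhat η (X ω) (D ω) - mC η (X ω) (D ω)) *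
      eR (X ω) (D ω)) P := by
    refine aux_int_of_bound P _ (2 * 1)
      (((hm1meas.sub hm0meas).mul he'meas).aestronglyMeasurable) ?_
    filter_upwards [hbe'] with ω hω
    exact aux_abs_mul_le (hbm10 ω) hω
  have intgπIvμ : Integrable (fun ω => (1 / πhat (X ω) (D ω)) *
      (if V ω < η then (1:ℝ) else 0)) μ :=
    intbndμ _ (1 / c₀ * 1) (hgπmeas.mul hIvmeas)
      fun ω => aux_abs_mul_le (hbgπ ω) (hbIv ω)
  -- identity hA
  have pullM := pullP _ (compSM (fun p => mhat η p.1 p.2 - mC η p.1 p.2)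
    (hm1base.sub hm0base)) iM10R
  have hA : (∫ ω, (1 - R ω) * (mhat η (X ω) (D ω) - (1 - γ)) ∂P)
      - ∫ ω, (1 - R ω) * (mC η (X ω) (D ω) - (1 - γ)) ∂P
      = (∫ ω, (mhat η (X ω) (D ω) - mC η (X ω) (D ω)) ∂P)
        - ∫ ω, (mhat η (X ω) (D ω) - mC η (X ω) (D ω)) * eR (X ω) (D ω) ∂P := by
    rw [← integral_sub iA1 iA2, ← pullM, ← integral_sub iM10 iM10R]
    exact integral_congr_ae (ae_of_all _ fun ω => by ring)
  -- identity hB1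
  have step1 : ∫ ω, R ω * ((1 / πhat (X ω) (D ω)) * (if V ω < η then (1:ℝ) else 0)) ∂P
      = ∫ ω, R ω * ((1 / πhat (X ω) (D ω)) * mC η (X ω) (D ω)) ∂P := by
    rw [bridge, bridge]
    congr 1
    exact pullμ _ (compSM (fun p => 1 / πhat p.1 p.2) (measurable_const.div hπhatmeas)) intgπIvμ
  have step2 : ∫ ω, R ω * ((1 / πhat (X ω) (D ω)) * mC η (X ω) (D ω)) ∂P
      = ∫ ω, ((1 / πhat (X ω) (D ω)) * mC η (X ω) (D ω)) * eR (X ω) (D ω) ∂P := by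
    rw [← pullP _ (compSM (fun p => (1 / πhat p.1 p.2) * mC η p.1 p.2)
      ((measurable_const.div hπhatmeas).mul hm0base)) iGm0R]
    exact integral_congr_ae (ae_of_all _ fun ω => by ring)
  have step3 : ∫ ω, R ω * ((1 / πhat (X ω) (D ω)) * mhat η (X ω) (D ω)) ∂P
      = ∫ ω, ((1 / πhat (X ω) (D ω)) * mhat η (X ω) (D ω)) * eR (X ω) (D ω) ∂P := by
    rw [← pullP _ (compSM (fun p => (1 / πhat p.1 p.2) * mhat η p.1 p.2)
      ((measurable_const.div hπhatmeas).mul hm1base)) iGm1R]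
    exact integral_congr_ae (ae_of_all _ fun ω => by ring)
  have hB1 : ∫ ω, R ω * ((1 / πhat (X ω) (D ω)) *
      ((if V ω < η then (1:ℝ) else 0) - mhat η (X ω) (D ω))) ∂P
      = (∫ ω, ((1 / πhat (X ω) (D ω)) * mC η (X ω) (D ω)) * eR (X ω) (D ω) ∂P)
        - ∫ ω, ((1 / πhat (X ω) (D ω)) * mhat η (X ω) (D ω)) * eR (X ω) (D ω) ∂P := by
    rw [← step2, ← step1, ← step3, ← integral_sub iRgIv iRgm1]
    exact integral_congr_ae (ae_of_all _ fun ω => by ring)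
  -- rewriting the three goal integrals
  have goal1 : ∫ ω, ((1 - R ω) * (mhat η (X ω) (D ω) - (1 - γ)) +
      (R ω / πhat (X ω) (D ω)) * ((if V ω < η then (1:ℝ) else 0) - mhat η (X ω) (D ω))) ∂P
      = (∫ ω, (1 - R ω) * (mhat η (X ω) (D ω) - (1 - γ)) ∂P)
        + ∫ ω, R ω * ((1 / πhat (X ω) (D ω)) *
            ((if V ω < η then (1:ℝ) else 0) - mhat η (X ω) (D ω))) ∂P := by
    rw [← integral_add iA1 iB1]
    refine integral_congr_ae (ae_of_all _ fun ω => ?_)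
    dsimp only
    rw [div_eq_mul_one_div]
    ring
  have iB2 : Integrable (fun ω => R ω * (((1 - eR (X ω) (D ω)) / eR (X ω) (D ω)) *
      ((if V ω < η then (1:ℝ) else 0) - mC η (X ω) (D ω)))) P := by
    refine (hqq.abs.const_mul 2).mono'
      ((hR.mul (hqmeas.mul (hIvmeas.sub hm0meas))).aestronglyMeasurable)
      (ae_of_all _ fun ω => ?_)
    rw [Real.norm_eq_abs]
    have heq : R ω * (((1 - eR (X ω) (D ω)) / eR (X ω) (D ω)) *
        ((if V ω < η then (1:ℝ) else 0) - mC η (X ω) (D ω)))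
        = (R ω * ((1 - eR (X ω) (D ω)) / eR (X ω) (D ω))) *
          ((if V ω < η then (1:ℝ) else 0) - mC η (X ω) (D ω)) := by ring
    rw [heq, abs_mul]
    have h2 : |(if V ω < η then (1:ℝ) else 0) - mC η (X ω) (D ω)| ≤ 2 := by
      have h1 := abs_le.mp (hbIv ω); have h0 := abs_le.mp (hbm0 ω)
      exact abs_le.mpr ⟨by linarith [h1.1, h0.2], by linarith [h1.2, h0.1]⟩
    calc |R ω * ((1 - eR (X ω) (D ω)) / eR (X ω) (D ω))| *
          |(if V ω < η then (1:ℝ) else 0) - mC η (X ω) (D ω)|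
        ≤ |R ω * ((1 - eR (X ω) (D ω)) / eR (X ω) (D ω))| * 2 :=
          mul_le_mul_of_nonneg_left h2 (abs_nonneg _)
      _ = 2 * |R ω * ((1 - eR (X ω) (D ω)) / eR (X ω) (D ω))| := by ring
  have goal2 : ∫ ω, ((1 - R ω) * (mC η (X ω) (D ω) - (1 - γ)) +
      (R ω / (eR (X ω) (D ω) / (1 - eR (X ω) (D ω)))) *
        ((if V ω < η then (1:ℝ) else 0) - mC η (X ω) (D ω))) ∂P
      = (∫ ω, (1 - R ω) * (mC η (X ω) (D ω) - (1 - γ)) ∂P)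
        + ∫ ω, R ω * (((1 - eR (X ω) (D ω)) / eR (X ω) (D ω)) *
            ((if V ω < η then (1:ℝ) else 0) - mC η (X ω) (D ω))) ∂P := by
    rw [← integral_add iA2 iB2]
    refine integral_congr_ae (ae_of_all _ fun ω => ?_)
    dsimp only
    rw [div_eq_mul_one_div (R ω), one_div_div]
    ring
  have goal3 : ∫ ω, eR (X ω) (D ω) *
      (1 / πhat (X ω) (D ω) - 1 / (eR (X ω) (D ω) / (1 - eR (X ω) (D ω)))) *
      (mC η (X ω) (D ω) - mhat η (X ω) (D ω)) ∂P
      = ((∫ ω, ((1 / πhat (X ω) (D ω)) * mC η (X ω) (D ω)) * eR (X ω) (D ω) ∂P)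
          - ∫ ω, ((1 / πhat (X ω) (D ω)) * mhat η (X ω) (D ω)) * eR (X ω) (D ω) ∂P)
        + ((∫ ω, (mhat η (X ω) (D ω) - mC η (X ω) (D ω)) ∂P)
          - ∫ ω, (mhat η (X ω) (D ω) - mC η (X ω) (D ω)) * eR (X ω) (D ω) ∂P) := by
    have iS1 : Integrable (fun ω => ((1 / πhat (X ω) (D ω)) * mC η (X ω) (D ω)) * eR (X ω) (D ω)
        - ((1 / πhat (X ω) (D ω)) * mhat η (X ω) (D ω)) * eR (X ω) (D ω)) P := iGm0e.sub iGm1e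
    have iS2 : Integrable (fun ω => (mhat η (X ω) (D ω) - mC η (X ω) (D ω))
        - (mhat η (X ω) (D ω) - mC η (X ω) (D ω)) * eR (X ω) (D ω)) P := iM10.sub iM10e
    have e1 : ∫ ω, eR (X ω) (D ω) *
        (1 / πhat (X ω) (D ω) - 1 / (eR (X ω) (D ω) / (1 - eR (X ω) (D ω)))) *
        (mC η (X ω) (D ω) - mhat η (X ω) (D ω)) ∂P
        = ∫ ω, ((((1 / πhat (X ω) (D ω)) * mC η (X ω) (D ω)) * eR (X ω) (D ω)
            - ((1 / πhat (X ω) (D ω)) * mhat η (X ω) (D ω)) * eR (X ω) (D ω))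
          + ((mhat η (X ω) (D ω) - mC η (X ω) (D ω))
            - (mhat η (X ω) (D ω) - mC η (X ω) (D ω)) * eR (X ω) (D ω))) ∂P := by
      refine integral_congr_ae ?_
      filter_upwards [heRbdd] with ω hω
      have hene : eR (X ω) (D ω) ≠ 0 := hω.1.ne'
      have hπne : πhat (X ω) (D ω) ≠ 0 := (hπ'pos ω).ne'

      rw [one_div_div]
      field_simp
      ring
    rw [e1, integral_add iS1 iS2, integral_sub iGm0e iGm1e, integral_sub iM10 iM10e]
  rw [goal1, goal2, goal3, hB1, K3]
  linarith [hA]
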